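/- Let R be an M×M Hermitian positive semidefinite complex matrix, K ≥ 1, σ² > 0, P_a > 0. Suppose α : (0, ∞) → [0, ∞) is differentiable and satisfies α(t) = (1/K)·trace( R·(I_M + (t/(1+tα(t)))·R)⁻¹ ) for all t > 0; define T(t) = (I_M + (t/(1+tα(t)))·R)⁻¹ and β(t) = [(1/K)·trace(R T(t)²)] / [(1 + tα(t))² − (t²/K)·trace(R T(t) R T(t))], and assume β is differentiable. Then the function g̃(ρ) = (σ²/(P_a ρ²))·β(1/ρ) + (1/K)·trace(T(1/ρ)) − (M − K)/K − (1/ρ)·β(1/ρ) is differentiable on (0, ∞) with derivative g̃′(ρ) = (−2σ²/(P_a ρ³) + 2/ρ²)·β(1/ρ) + (−σ²/(P_a ρ⁴) + 1/ρ³)·β′(1/ρ), and in particular g̃′(σ²/P_a) = 0. -/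

import Mathlib

open Matrix ComplexOrder

attribute [local instance] Matrix.linftyOpNormedRing Matrix.linftyOpNormedAlgebra

theorem stmt14_matinv_hasDerivAt {M : ℕ} (A : ℝ → Matrix (Fin M) (Fin M) ℂ)
    (A' : Matrix (Fin M) (Fin M) ℂ) (t : ℝ)
    (hA : HasDerivAt A A' t) (hU : IsUnit (A t)) :
    HasDerivAt (fun s => (A s)⁻¹) (-((A t)⁻¹ * A' * (A t)⁻¹)) t := by
  have h := (hasFDerivAt_ringInverse (𝕜 := ℝ) hU.unit)
  rw [hU.unit_spec] at h
  have h2 := h.comp_hasDerivAt t hA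
  have hcoe : (↑hU.unit⁻¹ : Matrix (Fin M) (Fin M) ℂ) = (A t)⁻¹ := by
    rw [Matrix.coe_units_inv, hU.unit_spec]
  simp only [Function.comp, ContinuousLinearMap.neg_apply,
    ContinuousLinearMap.mulLeftRight_apply, hcoe, Matrix.nonsing_inv_eq_ringInverse] at h2 ⊢
  exact h2

theorem stmt14_psd_smul {M : ℕ} {R : Matrix (Fin M) (Fin M) ℂ} (hR : R.PosSemidef) {r : ℝ}
    (hr : 0 ≤ r) : ((r : ℂ) • R).PosSemidef := by
  refine ⟨?_, fun x => ?_⟩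
  · unfold Matrix.IsHermitian
    rw [conjTranspose_smul, hR.1.eq, Complex.star_def, Complex.conj_ofReal]
  · have hs : (x.sum fun i xi => x.sum fun j xj => star xi * ((r : ℂ) • R) i j * xj) =
        (r : ℂ) * (x.sum fun i xi => x.sum fun j xj => star xi * R i j * xj) := by
      simp only [Finsupp.sum, Finset.mul_sum, Matrix.smul_apply, smul_eq_mul]
      exact Finset.sum_congr rfl fun i _ => Finset.sum_congr rfl fun j _ => by ring
    rw [hs]
    exact mul_nonneg (by exact_mod_cast hr) (hR.2 x)

theorem stmt14_unit_one_add {M : ℕ} {R : Matrix (Fin M) (Fin M) ℂ} (hR : R.PosSemidef) {r : ℝ}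
    (hr : 0 ≤ r) : IsUnit ((1 : Matrix (Fin M) (Fin M) ℂ) + (r : ℂ) • R) :=
  (Matrix.PosDef.add_posSemidef Matrix.PosDef.one (stmt14_psd_smul hR hr)).isUnit

noncomputable def stmt14_traceReCLM (M : ℕ) : Matrix (Fin M) (Fin M) ℂ →L[ℝ] ℝ :=
  Complex.reCLM.comp (LinearMap.toContinuousLinearMap (Matrix.traceLinearMap (Fin M) ℝ ℂ))

@[simp] theorem stmt14_traceReCLM_apply {M : ℕ} (A : Matrix (Fin M) (Fin M) ℂ) :
    stmt14_traceReCLM M A = A.trace.re := rfl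

theorem stmt14_key {M : ℕ} (R : Matrix (Fin M) (Fin M) ℂ) (hR : R.PosSemidef)
    (K : ℕ) (hK : 1 ≤ K) (α : ℝ → ℝ)
    (hα0 : ∀ t, 0 < t → 0 ≤ α t)
    (hαdiff : ∀ t, 0 < t → DifferentiableAt ℝ α t)
    (hfix : ∀ t, 0 < t → (α t : ℂ) = (K : ℂ)⁻¹ *
      (R * ((1 : Matrix (Fin M) (Fin M) ℂ) + ((t / (1 + t * α t) : ℝ) : ℂ) • R)⁻¹).trace)
    (T : ℝ → Matrix (Fin M) (Fin M) ℂ)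
    (hT : ∀ t, T t = ((1 : Matrix (Fin M) (Fin M) ℂ) + ((t / (1 + t * α t) : ℝ) : ℂ) • R)⁻¹)
    (β : ℝ → ℝ)
    (hβ : ∀ t, β t = ((1 / K) * (R * T t * T t).trace.re) /
      ((1 + t * α t) ^ 2 - (t ^ 2 / K) * (R * T t * R * T t).trace.re))
    {t : ℝ} (ht : 0 < t) :
    HasDerivAt (fun s => (1 / (K : ℝ)) * (T s).trace.re) (-(β t)) t := by
  have hK0 : (0:ℝ) < K := by exact_mod_cast hK
  set a' := deriv α t with ha'
  have hd0 : (0:ℝ) < 1 + t * α t := by nlinarith [hα0 t ht]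
  have hu : ∀ s, 0 < s → 0 ≤ s / (1 + s * α s) := fun s hs =>
    div_nonneg hs.le (by nlinarith [hα0 s hs])
  set U' : ℝ := (1 - t^2 * a') / (1 + t * α t)^2 with hU'
  have hden : HasDerivAt (fun s => 1 + s * α s) (α t + t * a') t := by
    have h := ((hasDerivAt_id t).mul ((hαdiff t ht).hasDerivAt)).const_add 1
    simpa using h
  have huD : HasDerivAt (fun s => s / (1 + s * α s)) U' t := by
    have h := (hasDerivAt_id t).div hden hd0.ne'
    refine h.congr_deriv ?_
    rw [hU']
    simp only [id]
    field_simp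
    ring
  set A : ℝ → Matrix (Fin M) (Fin M) ℂ :=
    fun s => (1 : Matrix (Fin M) (Fin M) ℂ) + ((s / (1 + s * α s) : ℝ) : ℂ) • R with hA
  have hTA : ∀ s, T s = (A s)⁻¹ := fun s => hT s
  have hAd : HasDerivAt A ((U' : ℂ) • R) t := ((huD.ofReal_comp).smul_const R).const_add 1
  have hUnit : IsUnit (A t) := stmt14_unit_one_add hR (hu t ht)
  have hTd : HasDerivAt T (-((U' : ℂ) • (T t * R * T t))) t := by
    have h := stmt14_matinv_hasDerivAt A ((U' : ℂ) • R) t hAd hUnit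
    have hfun : (fun s => (A s)⁻¹) = T := (funext hTA).symm
    rw [hfun, ← hTA t] at h
    convert h using 1
    rw [mul_smul_comm, smul_mul_assoc]
  set χ : ℝ := (1/(K:ℝ)) * (R * T t * R * T t).trace.re with hχ
  set N : ℝ := (1/(K:ℝ)) * (R * T t * T t).trace.re with hN
  -- derivative of α via fixed point
  have hRTd : HasDerivAt (fun s => R * T s) (R * (-((U' : ℂ) • (T t * R * T t)))) t :=
    hTd.const_mul R
  have hφ : HasDerivAt (fun s => (1/(K:ℝ)) * ((R * T s).trace.re))
      ((1/(K:ℝ)) * ((R * (-((U' : ℂ) • (T t * R * T t)))).trace.re)) t :=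
    ((stmt14_traceReCLM M).hasFDerivAt.comp_hasDerivAt t hRTd).const_mul (1/(K:ℝ))
  have heq : α =ᶠ[nhds t] (fun s => (1/(K:ℝ)) * ((R * T s).trace.re)) := by
    filter_upwards [Ioi_mem_nhds ht] with s hs
    have h2 := hfix s hs
    rw [← hT s] at h2
    have hcast : ((K:ℂ))⁻¹ = (((1/(K:ℝ)) : ℝ) : ℂ) := by push_cast; ring
    rw [hcast] at h2
    have h3 : (α s : ℂ).re = ((((1/(K:ℝ)) : ℝ) : ℂ) * (R * T s).trace).re := by rw [h2]
    simpa [Complex.ofReal_re, Complex.mul_re, Complex.ofReal_im] using h3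
  have hαd2 : HasDerivAt α ((1/(K:ℝ)) * ((R * (-((U' : ℂ) • (T t * R * T t)))).trace.re)) t :=
    hφ.congr_of_eventuallyEq heq
  have ha'χ : a' = -(U' * χ) := by
    rw [ha', hαd2.deriv, hχ]
    have hmm : R * (-((U' : ℂ) • (T t * R * T t))) = (-(U' : ℂ)) • (R * T t * R * T t) := by
      rw [mul_neg, mul_smul_comm, neg_smul, ← mul_assoc, ← mul_assoc]
    rw [hmm, trace_smul, smul_eq_mul]
    have : (-(U' : ℂ)) = (((-U' : ℝ) : ℝ) : ℂ) := by push_cast; ring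
    rw [this]
    simp [Complex.mul_re, Complex.ofReal_re, Complex.ofReal_im]
    ring
  -- the algebraic identity
  set Dv : ℝ := (1 + t * α t)^2 - t^2 * χ with hDv
  have h3 : U' * (1 + t * α t)^2 = 1 - t^2 * a' := by
    rw [hU']; field_simp
  have hUD : U' * Dv = 1 := by
    rw [hDv]; linear_combination h3 - t^2 * ha'χ
  have hDv0 : Dv ≠ 0 := by
    intro h0; rw [h0, mul_zero] at hUD; exact one_ne_zero hUD.symm
  have hβt : β t = U' * N := by
    rw [hβ t]
    have hde : ((1 + t * α t)^2 - (t^2/K) * (R * T t * R * T t).trace.re) = Dv := by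
      rw [hDv, hχ]; ring
    rw [hde, hN, div_eq_iff hDv0]
    linear_combination (-((1/(K:ℝ)) * (R * T t * T t).trace.re)) * hUD
  -- derivative of trace T
  have htrT : HasDerivAt (fun s => (1/(K:ℝ)) * (T s).trace.re)
      ((1/(K:ℝ)) * ((-((U' : ℂ) • (T t * R * T t))).trace.re)) t :=
    ((stmt14_traceReCLM M).hasFDerivAt.comp_hasDerivAt t hTd).const_mul (1/(K:ℝ))
  convert htrT using 1
  rw [hβt, hN, Matrix.trace_mul_cycle R (T t) (T t), ← neg_smul, trace_smul,
    smul_eq_mul, ← Complex.ofReal_neg, Complex.re_ofReal_mul]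
  ring

theorem stmt14 {M : ℕ} (R : Matrix (Fin M) (Fin M) ℂ) (hR : R.PosSemidef)
    (K : ℕ) (hK : 1 ≤ K) (σ2 Pa : ℝ) (hσ2 : 0 < σ2) (hPa : 0 < Pa)
    (α : ℝ → ℝ)
    (hα0 : ∀ t, 0 < t → 0 ≤ α t)
    (hαdiff : ∀ t, 0 < t → DifferentiableAt ℝ α t)
    (hfix : ∀ t, 0 < t → (α t : ℂ) = (K : ℂ)⁻¹ *
      (R * ((1 : Matrix (Fin M) (Fin M) ℂ) + ((t / (1 + t * α t) : ℝ) : ℂ) • R)⁻¹).trace)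
    (T : ℝ → Matrix (Fin M) (Fin M) ℂ)
    (hT : ∀ t, T t = ((1 : Matrix (Fin M) (Fin M) ℂ) + ((t / (1 + t * α t) : ℝ) : ℂ) • R)⁻¹)
    (β : ℝ → ℝ)
    (hβ : ∀ t, β t = ((1 / K) * (R * T t * T t).trace.re) /
      ((1 + t * α t) ^ 2 - (t ^ 2 / K) * (R * T t * R * T t).trace.re))
    (hβdiff : ∀ t, 0 < t → DifferentiableAt ℝ β t)
    (gTilde : ℝ → ℝ)
    (hg : ∀ ρ, gTilde ρ = (σ2 / (Pa * ρ ^ 2)) * β (1 / ρ) + (1 / K) * (T (1 / ρ)).trace.re -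
      ((M : ℝ) - (K : ℝ)) / K - (1 / ρ) * β (1 / ρ)) :
    (∀ ρ, 0 < ρ → HasDerivAt gTilde
      ((-2 * σ2 / (Pa * ρ ^ 3) + 2 / ρ ^ 2) * β (1 / ρ) +
        (-σ2 / (Pa * ρ ^ 4) + 1 / ρ ^ 3) * deriv β (1 / ρ)) ρ) ∧
    deriv gTilde (σ2 / Pa) = 0 := by
  have hK0 : (0:ℝ) < K := by exact_mod_cast hK
  have key : ∀ t, 0 < t → HasDerivAt (fun s => (1 / (K : ℝ)) * (T s).trace.re) (-(β t)) t :=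
    fun t ht => stmt14_key R hR K hK α hα0 hαdiff hfix T hT β hβ ht
  have main : ∀ ρ, 0 < ρ → HasDerivAt gTilde
      ((-2 * σ2 / (Pa * ρ ^ 3) + 2 / ρ ^ 2) * β (1 / ρ) +
        (-σ2 / (Pa * ρ ^ 4) + 1 / ρ ^ 3) * deriv β (1 / ρ)) ρ := by
    intro ρ hρ
    have hρ0 : ρ ≠ 0 := hρ.ne'
    have hinv : HasDerivAt (fun x : ℝ => 1 / x) (-(1/ρ^2)) ρ := by
      simpa only [one_div] using hasDerivAt_inv hρ0
    have h1ρ : 0 < 1 / ρ := by positivity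
    have hβc : HasDerivAt (fun x : ℝ => β (1 / x)) (deriv β (1/ρ) * (-(1/ρ^2))) ρ :=
      ((hβdiff _ h1ρ).hasDerivAt).comp ρ hinv
    have hTc : HasDerivAt (fun x : ℝ => (1 / (K : ℝ)) * (T (1 / x)).trace.re)
        (-(β (1/ρ)) * (-(1/ρ^2))) ρ := (key _ h1ρ).comp ρ hinv
    have hpow : HasDerivAt (fun x : ℝ => Pa * x ^ 2) (Pa * (2 * ρ)) ρ := by
      simpa [mul_comm] using ((hasDerivAt_pow 2 ρ).const_mul Pa)
    have hp1 : HasDerivAt (fun x : ℝ => σ2 / (Pa * x ^ 2))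
        ((0 * (Pa * ρ ^ 2) - σ2 * (Pa * (2 * ρ))) / (Pa * ρ ^ 2) ^ 2) ρ :=
      (hasDerivAt_const ρ σ2).div hpow (by positivity)
    have hsum := (((hp1.mul hβc).add hTc).sub
      (hasDerivAt_const ρ (((M : ℝ) - (K : ℝ)) / K))).sub (hinv.mul hβc)
    have hgfun : gTilde = fun ρ => (σ2 / (Pa * ρ ^ 2)) * β (1 / ρ) +
        (1 / K) * (T (1 / ρ)).trace.re - ((M : ℝ) - (K : ℝ)) / K - (1 / ρ) * β (1 / ρ) :=
      funext hg
    rw [hgfun]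
    refine hsum.congr_deriv ?_
    field_simp
    ring
  refine ⟨main, ?_⟩
  have hρp : 0 < σ2 / Pa := by positivity
  rw [(main _ hρp).deriv]
  have h1 : (-2 * σ2 / (Pa * (σ2/Pa) ^ 3) + 2 / (σ2/Pa) ^ 2) = 0 := by
    field_simp
    ring
  have h2 : (-σ2 / (Pa * (σ2/Pa) ^ 4) + 1 / (σ2/Pa) ^ 3) = 0 := by
    field_simp
    ring
  rw [h1, h2]
  ring
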